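/- Let 1 ≤ k and 2k ≤ n. Then for every 0 ≤ m ≤ k−1, f(n,k,k−m) ≤ (2/9)^{k−1−m} · f(n,k,1). -/

import Mathlib

set_option maxHeartbeats 1000000


/-- The Gaussian binomial coefficient `[n choose k]₂`, as a rational number. -/
def gbinomQ (n k : ℕ) : ℚ :=
  (∏ i ∈ Finset.range k, ((2 : ℚ) ^ (n - i) - 1)) /
    (∏ i ∈ Finset.range k, ((2 : ℚ) ^ (k - i) - 1))

/-- `f(n,k,m) = 2^{(k-m)²}·[n-k choose k-m]₂·[k choose m]₂`. -/
def fQ (n k m : ℕ) : ℚ := 2 ^ ((k - m) ^ 2) * gbinomQ (n - k) (k - m) * gbinomQ k m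

open Finset

lemma gbinomQ_eq (n k : ℕ) : gbinomQ n k =
    (∏ i ∈ range k, ((2 : ℚ) ^ (n - i) - 1)) / (∏ i ∈ range k, ((2 : ℚ) ^ (i + 1) - 1)) := by
  rw [gbinomQ]
  congr 1
  rw [← Finset.prod_range_reflect]
  exact Finset.prod_congr rfl fun i hi => by
    simp only [Finset.mem_range] at hi
    congr 2
    omega

lemma Dpos (k : ℕ) : 0 < ∏ i ∈ range k, ((2 : ℚ) ^ (i + 1) - 1) := by
  apply Finset.prod_pos
  intro i _
  have : (2:ℚ)^1 ≤ 2^(i+1) := pow_le_pow_right₀ (by norm_num) (by omega)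
  simp at this; linarith

lemma Npos {n k : ℕ} (h : k ≤ n) : 0 < ∏ i ∈ range k, ((2 : ℚ) ^ (n - i) - 1) := by
  apply Finset.prod_pos
  intro i hi
  simp only [Finset.mem_range] at hi
  have : (2:ℚ)^1 ≤ 2^(n-i) := pow_le_pow_right₀ (by norm_num) (by omega)
  simp at this; linarith

lemma step {n k m : ℕ} (hk2 : m + 2 ≤ k) (hn : 2 * k ≤ n) :
    fQ n k (k - m) ≤ (2 / 9 : ℚ) * fQ n k (k - (m + 1)) := by
  have hkm : k - (k - m) = m := by omega
  have hkm1 : k - (k - (m + 1)) = m + 1 := by omega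
  rw [fQ, fQ, hkm, hkm1]
  -- abbreviations
  set A : ℚ := ∏ i ∈ range m, ((2 : ℚ) ^ (n - k - i) - 1) with hA
  set E : ℚ := ∏ i ∈ range m, ((2 : ℚ) ^ (i + 1) - 1) with hE
  set B : ℚ := ∏ i ∈ range (k - m - 1), ((2 : ℚ) ^ (k - i) - 1) with hB
  set E' : ℚ := ∏ i ∈ range (k - m - 1), ((2 : ℚ) ^ (i + 1) - 1) with hE'
  set a : ℚ := (2 : ℚ) ^ (n - k - m) - 1 with ha
  set b : ℚ := (2 : ℚ) ^ (m + 1) - 1 with hb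
  set c : ℚ := (2 : ℚ) ^ (k - m) - 1 with hc
  have hg1 : gbinomQ (n - k) m = A / E := gbinomQ_eq _ _
  have hg2 : gbinomQ (n - k) (m + 1) = (A * a) / (E * b) := by
    rw [gbinomQ_eq, prod_range_succ, prod_range_succ]
  have hg3 : gbinomQ k (k - m) = (B * b) / (E' * c) := by
    have e1 : k - m = (k - m - 1) + 1 := by omega
    rw [gbinomQ_eq, e1, prod_range_succ, prod_range_succ]
    have e2 : k - (k - m - 1) = m + 1 := by omega
    have e3 : k - m - 1 + 1 = k - m := by omega
    rw [e2, e3]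
  have hg4 : gbinomQ k (k - (m + 1)) = B / E' := by
    have e1 : k - (m + 1) = k - m - 1 := by omega
    rw [e1, gbinomQ_eq]
  rw [hg1, hg2, hg3, hg4]
  -- positivity facts
  have hApos : 0 < A := Npos (by omega)
  have hEpos : 0 < E := Dpos m
  have hBpos : 0 < B := Npos (by omega)
  have hE'pos : 0 < E' := Dpos (k - m - 1)
  have hbpos : (0:ℚ) < b := by
    have : (2:ℚ)^1 ≤ 2^(m+1) := pow_le_pow_right₀ (by norm_num) (by omega)
    simp at this; rw [hb]; linarith
  have ha3 : (3:ℚ) ≤ a := by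
    have : (2:ℚ)^2 ≤ 2^(n-k-m) := pow_le_pow_right₀ (by norm_num) (by omega)
    norm_num at this; rw [ha]; linarith
  have hc3 : (3:ℚ) ≤ c := by
    have : (2:ℚ)^2 ≤ 2^(k-m) := pow_le_pow_right₀ (by norm_num) (by omega)
    norm_num at this; rw [hc]; linarith
  have hcpos : (0:ℚ) < c := by linarith
  -- key numeric inequality
  have hpow : ((2:ℚ)) ^ ((m+1)^2) = 2 ^ (m^2) * 2 ^ (2*m+1) := by
    rw [← pow_add]; congr 1; ring
  have hble : b ≤ 2 ^ (m+1) := by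
    have : (0:ℚ) < 2 ^ (m+1) := by positivity
    rw [hb]; linarith
  have hb2 : b ^ 2 ≤ 2 * 2 ^ (2*m+1) := by
    have h1 : b ^ 2 ≤ (2 ^ (m+1) : ℚ) ^ 2 := by
      have := mul_le_mul hble hble hbpos.le (by positivity : (0:ℚ) ≤ 2 ^ (m+1))
      calc b ^ 2 = b * b := sq b
        _ ≤ 2 ^ (m+1) * 2 ^ (m+1) := this
        _ = ((2:ℚ) ^ (m+1)) ^ 2 := (sq _).symm
    have h2 : ((2:ℚ)^(m+1))^2 = 2 * 2^(2*m+1) := by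
      rw [← pow_mul, ← pow_succ']; congr 1; ring
    linarith [h1, h2.le, h2.ge]
  have hac : (9:ℚ) ≤ a * c := by nlinarith
  have key : 9 * (2:ℚ)^(m^2) * b^2 ≤ 2 * 2^((m+1)^2) * a * c := by
    have hX : (0:ℚ) ≤ 2^(m^2) := by positivity
    have hY : (0:ℚ) ≤ 2 * (2^(m^2) * 2^(2*m+1)) := by positivity
    calc 9 * (2:ℚ)^(m^2) * b^2 = 2^(m^2) * (9 * b^2) := by ring
      _ ≤ 2^(m^2) * (9 * (2 * 2^(2*m+1))) := by
          apply mul_le_mul_of_nonneg_left _ hX; linarith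
      _ = 2 * (2^(m^2) * 2^(2*m+1)) * 9 := by ring
      _ ≤ 2 * (2^(m^2) * 2^(2*m+1)) * (a * c) := mul_le_mul_of_nonneg_left hac hY
      _ = 2 * 2^((m+1)^2) * a * c := by rw [hpow]; ring
  -- reduce to cross-multiplied form
  have hE0 : E ≠ 0 := ne_of_gt hEpos
  have hE'0 : E' ≠ 0 := ne_of_gt hE'pos
  have hb0 : b ≠ 0 := ne_of_gt hbpos
  have hc0 : c ≠ 0 := ne_of_gt hcpos
  have hL : (2:ℚ) ^ (m^2) * (A / E) * (B * b / (E' * c))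
      = (2 ^ (m^2) * A * (B * b)) / (E * (E' * c)) := by
    field_simp
  have hR : (2 / 9 : ℚ) * (2 ^ ((m+1)^2) * (A * a / (E * b)) * (B / E'))
      = (2 * 2 ^ ((m+1)^2) * (A * a) * B) / (9 * (E * b) * E') := by
    field_simp
  rw [hL, hR, div_le_div_iff₀ (by positivity) (by positivity)]
  calc (2:ℚ) ^ (m^2) * A * (B * b) * (9 * (E * b) * E')
      = (9 * 2^(m^2) * b^2) * (A * B * E * E') := by ring
    _ ≤ (2 * 2^((m+1)^2) * a * c) * (A * B * E * E') := by
        apply mul_le_mul_of_nonneg_right key (by positivity)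
    _ = 2 * 2 ^ ((m+1)^2) * (A * a) * B * (E * (E' * c)) := by ring

/-- For `1 ≤ k`, `2k ≤ n` and every `0 ≤ m ≤ k-1`,
`f(n,k,k-m) ≤ (2/9)^{k-1-m}·f(n,k,1)`. -/
theorem fQ_le_pow_mul_fQ_one {n k : ℕ} (hk : 1 ≤ k) (hn : 2 * k ≤ n) :
    ∀ m ≤ k - 1, fQ n k (k - m) ≤ (2 / 9 : ℚ) ^ (k - 1 - m) * fQ n k 1 := by
  have main : ∀ d m, m + d = k - 1 → fQ n k (k - m) ≤ (2/9:ℚ)^d * fQ n k 1 := by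
    intro d
    induction d with
    | zero =>
      intro m hm
      have h1 : k - m = 1 := by omega
      rw [h1]; simp
    | succ d ih =>
      intro m hm
      have hstep := step (show m + 2 ≤ k by omega) hn
      have hih := ih (m+1) (by omega)
      calc fQ n k (k - m) ≤ (2/9:ℚ) * fQ n k (k - (m+1)) := hstep
        _ ≤ (2/9:ℚ) * ((2/9:ℚ)^d * fQ n k 1) :=
            mul_le_mul_of_nonneg_left hih (by norm_num)
        _ = (2/9:ℚ)^(d+1) * fQ n k 1 := by ring
  intro m hm
  exact main (k - 1 - m) m (by omega)
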